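/- If G is block-decomposable and every node of G has degree at most 3, then no block decomposition of G contains a square block. -/

import Mathlib

/-- The six block shapes: spike, triangle, infork, outfork, diamond, square. -/
inductive BlockShape : Type
  | spike | triangle | infork | outfork | diamond | square
  deriving DecidableEq

namespace BlockShape

/-- Number of nodes of each block shape. -/
def numNodes : BlockShape → ℕ
  | spike => 2
  | triangle => 3
  | infork => 3
  | outfork => 3
  | diamond => 4
  | square => 5

/-- The directed edges of each block shape.
For the spike the nodes are `x = 0, y = 1` with edge `x → y`.
For the triangle the nodes are `0, 1, 2` with edges `0 → 1 → 2 → 0`.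
For the infork the nodes are `x = 0, y = 1, c = 2` with edges `x → c`, `y → c`.
For the outfork the nodes are `x = 0, y = 1, c = 2` with edges `c → x`, `c → y`.
For the diamond the nodes are `p = 0, q = 1, x = 2, y = 3` with boundary edges
`p → x, x → q, q → y, y → p` and mid-edge `q → p`.
For the square the nodes are the center `c = 0` and corners `v1 = 1, …, v4 = 4`, with
edges `v1 → v2 → v3 → v4 → v1`, `c → v1`, `v2 → c`, `c → v3`, `v4 → c`. -/
def edges : (s : BlockShape) → List (Fin s.numNodes × Fin s.numNodes)
  | spike => ([(0, 1)] : List (Fin 2 × Fin 2))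
  | triangle => ([(0, 1), (1, 2), (2, 0)] : List (Fin 3 × Fin 3))
  | infork => ([(0, 2), (1, 2)] : List (Fin 3 × Fin 3))
  | outfork => ([(2, 0), (2, 1)] : List (Fin 3 × Fin 3))
  | diamond => ([(0, 2), (2, 1), (1, 3), (3, 0), (1, 0)] : List (Fin 4 × Fin 4))
  | square => ([(1, 2), (2, 3), (3, 4), (4, 1), (0, 1), (2, 0), (0, 3), (4, 0)] :
      List (Fin 5 × Fin 5))

/-- The outlets (white nodes) of each block shape. -/
def IsOutlet : (s : BlockShape) → Fin s.numNodes → Prop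
  | spike, _ => True
  | triangle, _ => True
  | infork, i => (i : ℕ) = 2
  | outfork, i => (i : ℕ) = 2
  | diamond, i => (i : ℕ) = 0 ∨ (i : ℕ) = 1
  | square, i => (i : ℕ) = 0

/-- The degree of a node inside its block (number of incident edges). -/
def blockDeg (s : BlockShape) (i : Fin s.numNodes) : ℕ :=
  s.edges.countP fun e => decide (e.1 = i) || decide (e.2 = i)

end BlockShape

/-- A directed multigraph on a vertex type `V` is given by its edge multiplicity
function `G : V → V → ℕ`.  It is a directed graph in our sense if it has no loops
and no 2-cycles. -/
def IsDiGraph {V : Type} (G : V → V → ℕ) : Prop :=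
  (∀ v, G v v = 0) ∧ ∀ x y, G x y = 0 ∨ G y x = 0

/-- Degree of a node: the number of incident edges counted with multiplicity. -/
def degree {V : Type} [Fintype V] (G : V → V → ℕ) (v : V) : ℕ :=
  ∑ w, (G v w + G w v)

/-- Two nodes are adjacent if some edge joins them (in either direction). -/
def Adj {V : Type} (G : V → V → ℕ) (x y : V) : Prop := 0 < G x y + G y x

/-- `Reach G x y` : `y` lies in the connected component of `x`. -/
def Reach {V : Type} (G : V → V → ℕ) : V → V → Prop := Relation.ReflTransGen (Adj G)

/-- The connected component of a node, as a finset. -/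
noncomputable def component {V : Type} [Fintype V] (G : V → V → ℕ) (v : V) : Finset V :=
  letI := Classical.decPred fun w => Reach G v w
  Finset.univ.filter (Reach G v)

/-- Total number of block edges mapped onto the ordered pair `(x, y)` by the gluing data. -/
def blockMult {V : Type} [DecidableEq V] (n : ℕ) (shape : Fin n → BlockShape)
    (emb : (b : Fin n) → Fin (shape b).numNodes → V) (x y : V) : ℕ :=
  ∑ b : Fin n, (shape b).edges.countP fun e => decide (emb b e.1 = x ∧ emb b e.2 = y)

/-- A block decomposition of the directed multigraph `G` : a finite collection of blocks
together with an identification of their nodes with the nodes of `G` such that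
* each block is embedded injectively,
* nodes of two distinct blocks may be identified only if both are outlets,
* each outlet is identified with at most one other outlet (no vertex lies in three blocks),
* every vertex of `G` comes from some block, and
* the multiplicity of each edge of `G` is the number of block edges giving it minus the
  number of block edges giving the reversed edge (two parallel edges with the same
  direction are kept as a double edge; two parallel edges with opposite directions
  annihilate each other). -/
structure BlockDecomposition {V : Type} [Fintype V] [DecidableEq V] (G : V → V → ℕ) :
    Type where
  n : ℕ
  shape : Fin n → BlockShape
  emb : (b : Fin n) → Fin (shape b).numNodes → V
  emb_inj : ∀ b, Function.Injective (emb b)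
  glue_outlets : ∀ (b c : Fin n) (i : Fin (shape b).numNodes) (j : Fin (shape c).numNodes),
    emb b i = emb c j → b ≠ c → (shape b).IsOutlet i ∧ (shape c).IsOutlet j
  atMostTwo : ∀ (b c d : Fin n) (i : Fin (shape b).numNodes) (j : Fin (shape c).numNodes)
    (k : Fin (shape d).numNodes), emb b i = emb c j → emb b i = emb d k →
    b = c ∨ b = d ∨ c = d
  covers : ∀ v : V, ∃ b i, emb b i = v
  edge_eq : ∀ x y : V, G x y = blockMult n shape emb x y - blockMult n shape emb y x

/-- The number of block edges of a decomposition lying over the ordered pair `(x, y)`. -/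
def BlockDecomposition.mult {V : Type} [Fintype V] [DecidableEq V] {G : V → V → ℕ}
    (D : BlockDecomposition G) : V → V → ℕ :=
  blockMult D.n D.shape D.emb

/-- A graph is (block-)decomposable if it admits a block decomposition. -/
def Decomposable {V : Type} [Fintype V] [DecidableEq V] (G : V → V → ℕ) : Prop :=
  Nonempty (BlockDecomposition G)

/-- The edge `e` of block `b` is annihilated in the decomposition `D` : some edge of
another block lies over the same pair of vertices with the opposite direction. -/
def BlockDecomposition.EdgeAnnihilated {V : Type} [Fintype V] [DecidableEq V]
    {G : V → V → ℕ} (D : BlockDecomposition G) (b : Fin D.n)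
    (e : Fin (D.shape b).numNodes × Fin (D.shape b).numNodes) : Prop :=
  e ∈ (D.shape b).edges ∧
    ∃ (c : Fin D.n) (f : Fin (D.shape c).numNodes × Fin (D.shape c).numNodes),
      c ≠ b ∧ f ∈ (D.shape c).edges ∧ D.emb c f.1 = D.emb b e.2 ∧ D.emb c f.2 = D.emb b e.1
/-- if every node of a block-decomposable graph has degree at most 3,
then no block decomposition of it contains a square block. -/
theorem stmt_13 {V : Type} [Fintype V] [DecidableEq V] (G : V → V → ℕ)
    (hG : IsDiGraph G) (hdeg : ∀ v, degree G v ≤ 3)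
    (D : BlockDecomposition G) (b : Fin D.n) :
    D.shape b ≠ BlockShape.square := by
  intro hb
  -- a "bad center" i with four distinct non-outlet neighbours, in a block without
  -- opposite edge pairs
  have hbad : ∃ (i : Fin (D.shape b).numNodes) (j : Fin 4 → Fin (D.shape b).numNodes),
      Function.Injective j ∧ (∀ k, ¬ (D.shape b).IsOutlet (j k)) ∧
      (∀ k, (i, j k) ∈ (D.shape b).edges ∨ (j k, i) ∈ (D.shape b).edges) ∧
      (∀ e ∈ (D.shape b).edges, (e.2, e.1) ∉ (D.shape b).edges) := by
    rw [hb]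
    refine ⟨(0 : Fin 5), (![1, 2, 3, 4] : Fin 4 → Fin 5),
      (by decide : Function.Injective (![1, 2, 3, 4] : Fin 4 → Fin 5)), ?_, by decide, by decide⟩
    intro k
    fin_cases k <;> simp [BlockShape.IsOutlet, BlockShape.edges] <;> decide
  obtain ⟨i, j, hjinj, hjout, hjedge, hnorev⟩ := hbad
  -- no node of another block maps onto a non-outlet of b
  have noOther : ∀ (p : Fin (D.shape b).numNodes), ¬ (D.shape b).IsOutlet p →
      ∀ c, c ≠ b → ∀ k, D.emb c k ≠ D.emb b p := by
    intro p hp c hc k hk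
    exact hp (D.glue_outlets c b k p hk hc).2
  -- multiplicity towards a non-outlet comes only from block b
  have multTo : ∀ (x : V) (p : Fin (D.shape b).numNodes), ¬ (D.shape b).IsOutlet p →
      D.mult x (D.emb b p) =
        (D.shape b).edges.countP fun e =>
          decide (D.emb b e.1 = x ∧ D.emb b e.2 = D.emb b p) := by
    intro x p hp
    unfold BlockDecomposition.mult blockMult
    refine Finset.sum_eq_single b ?_ (by simp)
    intro c _ hc
    rw [List.countP_eq_zero]
    intro e _
    simp only [decide_eq_true_eq, not_and]
    intro _ h2
    exact noOther p hp c hc e.2 h2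
  have multFrom : ∀ (x : V) (p : Fin (D.shape b).numNodes), ¬ (D.shape b).IsOutlet p →
      D.mult (D.emb b p) x =
        (D.shape b).edges.countP fun e =>
          decide (D.emb b e.1 = D.emb b p ∧ D.emb b e.2 = x) := by
    intro x p hp
    unfold BlockDecomposition.mult blockMult
    refine Finset.sum_eq_single b ?_ (by simp)
    intro c _ hc
    rw [List.countP_eq_zero]
    intro e _
    simp only [decide_eq_true_eq, not_and]
    intro h1
    exact absurd h1 (noOther p hp c hc e.1)
  -- every corner edge survives in G
  have key : ∀ k : Fin 4,
      1 ≤ G (D.emb b i) (D.emb b (j k)) + G (D.emb b (j k)) (D.emb b i) := by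
    intro k
    rcases hjedge k with h | h
    · have h1 : 1 ≤ D.mult (D.emb b i) (D.emb b (j k)) := by
        rw [multTo _ _ (hjout k)]
        rw [Nat.one_le_iff_ne_zero, ← Nat.pos_iff_ne_zero, List.countP_pos_iff]
        exact ⟨(i, j k), h, by simp⟩
      have h0 : D.mult (D.emb b (j k)) (D.emb b i) = 0 := by
        rw [multFrom _ _ (hjout k), List.countP_eq_zero]
        intro e he
        simp only [decide_eq_true_eq, not_and]
        intro h1 h2
        have e1 : e.1 = j k := D.emb_inj b h1
        have e2 : e.2 = i := D.emb_inj b h2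
        have : e = (j k, i) := by rw [← e1, ← e2]
        exact hnorev (i, j k) h (by simpa [this] using he)
      have hedge := D.edge_eq (D.emb b i) (D.emb b (j k))
      have hmm : G (D.emb b i) (D.emb b (j k)) =
          D.mult (D.emb b i) (D.emb b (j k)) - D.mult (D.emb b (j k)) (D.emb b i) := hedge
      omega
    · have h1 : 1 ≤ D.mult (D.emb b (j k)) (D.emb b i) := by
        rw [multFrom _ _ (hjout k)]
        rw [Nat.one_le_iff_ne_zero, ← Nat.pos_iff_ne_zero, List.countP_pos_iff]
        exact ⟨(j k, i), h, by simp⟩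
      have h0 : D.mult (D.emb b i) (D.emb b (j k)) = 0 := by
        rw [multTo _ _ (hjout k), List.countP_eq_zero]
        intro e he
        simp only [decide_eq_true_eq, not_and]
        intro h1 h2
        have e1 : e.1 = i := D.emb_inj b h1
        have e2 : e.2 = j k := D.emb_inj b h2
        have : e = (i, j k) := by rw [← e1, ← e2]
        exact hnorev (j k, i) h (by simpa [this] using he)
      have hedge := D.edge_eq (D.emb b (j k)) (D.emb b i)
      have hmm : G (D.emb b (j k)) (D.emb b i) =
          D.mult (D.emb b (j k)) (D.emb b i) - D.mult (D.emb b i) (D.emb b (j k)) := hedge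
      omega
  -- the center has degree at least 4
  have hdv : 4 ≤ degree G (D.emb b i) := by
    have hinj : Function.Injective fun k => D.emb b (j k) :=
      (D.emb_inj b).comp hjinj
    have hcard : (Finset.univ.image fun k => D.emb b (j k)).card = 4 := by
      rw [Finset.card_image_of_injective _ hinj, Finset.card_univ, Fintype.card_fin]
    calc (4 : ℕ) = ∑ _w ∈ Finset.univ.image (fun k => D.emb b (j k)), 1 := by
            rw [Finset.sum_const, hcard]; simp
      _ ≤ ∑ w ∈ Finset.univ.image (fun k => D.emb b (j k)),
            (G (D.emb b i) w + G w (D.emb b i)) := by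
            refine Finset.sum_le_sum ?_
            intro w hw
            simp only [Finset.mem_image] at hw
            obtain ⟨k, _, rfl⟩ := hw
            exact key k
      _ ≤ ∑ w, (G (D.emb b i) w + G w (D.emb b i)) :=
            Finset.sum_le_sum_of_subset (Finset.subset_univ _)
      _ = degree G (D.emb b i) := rfl
  have := hdeg (D.emb b i)
  omega
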